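/- In the dihedral group D₆ of order 6, the set of the three reflections {h, gh, g²h} is a locally maximal product-free set, and it is the unique locally maximal product-free set of size 3 in D₆. -/

import Mathlib

open scoped Pointwise

def productFree {G : Type*} [Group G] (S : Set G) : Prop :=
  ∀ a ∈ S, ∀ b ∈ S, a * b ∉ S

def locallyMaximalPF {G : Type*} [Group G] (S : Set G) : Prop :=
  productFree S ∧ ∀ T : Set G, productFree T → S ⊆ T → T = S

section Aux

set_option linter.unusedSectionVars false

variable {G : Type*} [Group G] [Fintype G] [DecidableEq G]

def pfF (F : Finset G) : Prop := ∀ a ∈ F, ∀ b ∈ F, a * b ∉ F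

instance pfF.dec : DecidablePred (pfF (G := G)) := fun _ => by
  unfold pfF; infer_instance

def lmF (F : Finset G) : Prop := pfF F ∧ ∀ T : Finset G, pfF T → F ⊆ T → T = F

instance lmF.dec : DecidablePred (lmF (G := G)) := fun _ => by
  unfold lmF; infer_instance

lemma pf_iff {S : Set G} (hS : S.Finite) : productFree S ↔ pfF hS.toFinset := by
  simp [productFree, pfF, Set.Finite.mem_toFinset]

lemma pf_coe (T : Finset G) : productFree (↑T : Set G) ↔ pfF T := by
  simp [productFree, pfF]

lemma lm_iff {S : Set G} (hS : S.Finite) : locallyMaximalPF S ↔ lmF hS.toFinset := by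
  constructor
  · rintro ⟨h1, h2⟩
    refine ⟨(pf_iff hS).1 h1, fun T hT hsub => ?_⟩
    have heq : (↑T : Set G) = S := h2 ↑T ((pf_coe T).2 hT) (by
      intro x hx
      simpa using hsub (by simpa [Set.Finite.mem_toFinset] using hx))
    apply Finset.coe_injective
    rw [Set.Finite.coe_toFinset, heq]
  · rintro ⟨h1, h2⟩
    refine ⟨(pf_iff hS).2 h1, fun T hT hsub => ?_⟩
    have hTf : T.Finite := Set.toFinite T
    have heq : hTf.toFinset = hS.toFinset := h2 hTf.toFinset ((pf_iff hTf).1 hT)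
      (by intro x hx
          simp only [Set.Finite.mem_toFinset] at *
          exact hsub hx)
    have := congrArg (fun s : Finset G => (↑s : Set G)) heq
    simpa [Set.Finite.coe_toFinset] using this

end Aux

set_option maxRecDepth 100000 in
theorem stmt10 :
    locallyMaximalPF ({DihedralGroup.sr 0, DihedralGroup.sr 1, DihedralGroup.sr 2} :
      Set (DihedralGroup 3)) ∧
    ∀ S : Set (DihedralGroup 3), locallyMaximalPF S → S.ncard = 3 →
      S = {DihedralGroup.sr 0, DihedralGroup.sr 1, DihedralGroup.sr 2} := by
  have key : ∀ F : Finset (DihedralGroup 3), lmF F → F.card = 3 →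
      F = ({DihedralGroup.sr 0, DihedralGroup.sr 1, DihedralGroup.sr 2} :
        Finset (DihedralGroup 3)) := by decide
  constructor
  · rw [lm_iff (Set.toFinite _)]
    have : (Set.toFinite ({DihedralGroup.sr 0, DihedralGroup.sr 1, DihedralGroup.sr 2} :
        Set (DihedralGroup 3))).toFinset =
        ({DihedralGroup.sr 0, DihedralGroup.sr 1, DihedralGroup.sr 2} :
          Finset (DihedralGroup 3)) := by
      ext x; simp [Set.Finite.mem_toFinset]
    rw [this]
    decide
  · intro S hS hcard
    have hSf : S.Finite := Set.toFinite S
    rw [lm_iff hSf] at hS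
    have hc : hSf.toFinset.card = 3 :=
      (Set.ncard_eq_toFinset_card S hSf).symm.trans hcard
    have heq := key hSf.toFinset hS hc
    have := congrArg (fun s : Finset (DihedralGroup 3) => (↑s : Set (DihedralGroup 3))) heq
    simpa [Set.Finite.coe_toFinset] using this
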